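/- Every finite binary matroid of rank r whose ground set has at most r + 2 elements is regular; that is, it admits a representation over every field. -/

import Mathlib

/-- `ρ` is a representation of the matroid `M` over the field `K`. -/
def Matroid.IsRep {α : Type*} (M : Matroid α) (K : Type*) [Field K] {V : Type*}
    [AddCommGroup V] [Module K V] (ρ : α → V) : Prop :=
  (∀ S ⊆ M.E, (M.Indep S ↔ Set.InjOn ρ S ∧ LinearIndependent K ((↑) : (ρ '' S) → V))) ∧
    Submodule.span K (ρ '' M.E) = ⊤

/-- `M` is representable over the field `K`. -/
def Matroid.RepresentableOver {α : Type*} (M : Matroid α) (K : Type) [Field K] : Prop :=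
  ∃ (V : Type) (_ : AddCommGroup V) (_ : Module K V) (ρ : α → V), M.IsRep K ρ

/-- A matroid is binary if it admits a representation over `𝔽₂ = ZMod 2`. -/
def Matroid.IsBinary {α : Type*} (M : Matroid α) : Prop :=
  M.RepresentableOver (ZMod 2)

/-- A matroid is regular if it admits a representation over every field. -/
def Matroid.IsRegular {α : Type*} (M : Matroid α) : Prop :=
  ∀ (K : Type) [Field K], M.RepresentableOver K

theorem linearIndependent_image {R M ι : Type*} [Ring R] [AddCommGroup M] [Module R M]
    {s : Set ι} {f : ι → M} (hf : Set.InjOn f s) :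
    (LinearIndependent R fun x : s => f x) ↔ LinearIndependent R fun x : f '' s => (x : M) :=
  linearIndepOn_iff_image hf

/-- A representation can be transported along a linear equivalence. -/
lemma Matroid.IsRep.comp_equiv {α : Type*} {M : Matroid α} {K : Type*} [Field K]
    {V₁ V₂ : Type*} [AddCommGroup V₁] [Module K V₁] [AddCommGroup V₂] [Module K V₂]
    {ρ : α → V₁} (h : M.IsRep K ρ) (L : V₁ ≃ₗ[K] V₂) :
    M.IsRep K (fun x => L (ρ x)) := by
  classical
  have himg : ∀ s : Set α, (fun x => L (ρ x)) '' s = ⇑L '' (ρ '' s) := fun s => by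
    rw [Set.image_image]
  constructor
  · intro S hS
    rw [h.1 S hS]
    have hinj : Set.InjOn ρ S ↔ Set.InjOn (fun x => L (ρ x)) S := by
      constructor
      · intro hI x hx y hy hxy
        exact hI hx hy (L.injective hxy)
      · intro hI x hx y hy hxy
        exact hI hx hy (by simp [hxy])
    have hlin : LinearIndependent K ((↑) : (ρ '' S) → V₁) ↔
        LinearIndependent K ((↑) : ((fun x => L (ρ x)) '' S) → V₂) := by
      rw [himg S, ← linearIndependent_image (L.injective.injOn)]
      constructor
      · intro hli
        exact hli.map' L.toLinearMap L.ker
      · intro hli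
        exact LinearIndependent.of_comp L.toLinearMap hli
    exact and_congr hinj hlin
  · have : Submodule.span K ((fun x => L (ρ x)) '' M.E)
        = Submodule.map (L : V₁ →ₗ[K] V₂) (Submodule.span K (ρ '' M.E)) := by
      rw [himg, Submodule.span_image_linearEquiv]
    rw [this, h.2, Submodule.map_top, LinearEquiv.range]

open Set Submodule

/-- Core linear algebra lemma: for a family of 0/1 vectors indexed by `S`, consisting of
standard basis vectors (for elements of `S ∩ B`) and at most two other vectors, linear
independence is equivalent to a purely combinatorial condition on supports. -/
lemma core_li_iff {α : Type*} {k : Type*} [Field k] {B S : Set α} [Fintype ↑B]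
    (hS : S.Finite) (hSBfin : (S \ B).Finite) (hd2 : (S \ B).ncard ≤ 2)
    (d : α → ↑B → k)
    (h01 : ∀ x ∈ S, ∀ b : ↑B, d x b = 0 ∨ d x b = 1)
    (hsingle : ∀ (x : α) (hx : x ∈ B), x ∈ S →
      (d x ⟨x, hx⟩ = 1 ∧ ∀ b' : ↑B, b' ≠ ⟨x, hx⟩ → d x b' = 0)) :
    LinearIndependent k (fun x : S => d x) ↔
      ((∀ x ∈ S \ B, ∃ b : ↑B, (↑b ∉ S) ∧ d x b = 1) ∧
       (∀ x ∈ S \ B, ∀ y ∈ S \ B, x ≠ y → ∃ b : ↑B, (↑b ∉ S) ∧ d x b ≠ d y b)) := by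
  classical
  haveI : Fintype ↑S := hS.fintype
  constructor
  · intro hli
    constructor
    · intro x hx
      by_contra hno
      push_neg at hno
      have hns : (⟨x, hx.1⟩ : ↑S) ∉ {y : ↑S | (y : α) ∈ B} := hx.2
      have hmem : d x ∈ span k ((fun y : ↑S => d ↑y) '' {y : ↑S | (y : α) ∈ B}) := by
        rw [pi_eq_sum_univ (d x)]
        refine Submodule.sum_mem _ (fun b _ => ?_)
        by_cases hbS : (b : α) ∈ S
        · have heb : (fun j => if b = j then (1 : k) else 0) = d ↑b := by
            funext j
            by_cases hj : b = j
            · rw [if_pos hj, ← hj]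
              exact ((hsingle ↑b b.2 hbS).1).symm
            · rw [if_neg hj]
              exact ((hsingle ↑b b.2 hbS).2 j (fun h => hj h.symm)).symm
          rw [heb]
          exact Submodule.smul_mem _ _ (Submodule.subset_span ⟨⟨↑b, hbS⟩, b.2, rfl⟩)
        · have h0 : d x b ≠ 1 := hno b hbS
          have : d x b = 0 := (h01 x hx.1 b).resolve_right h0
          rw [this, zero_smul]
          exact Submodule.zero_mem _
      exact hli.notMem_span_image hns hmem
    · intro x hx y hy hxy
      by_contra hno
      push_neg at hno
      have hns : (⟨x, hx.1⟩ : ↑S) ∉ ({z : ↑S | (z : α) ∈ B} ∪ {⟨y, hy.1⟩}) := by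
        rintro (h | h)
        · exact hx.2 h
        · exact hxy (congrArg Subtype.val h)
      have hmem : d x ∈ span k
          ((fun z : ↑S => d ↑z) '' ({z : ↑S | (z : α) ∈ B} ∪ {⟨y, hy.1⟩})) := by
        have hxy' : d x = d y + ∑ b : ↑B, ((d x - d y) b) • (fun j => if b = j then (1:k) else 0) :=
          sub_eq_iff_eq_add'.mp (pi_eq_sum_univ (d x - d y))
        rw [hxy']
        refine Submodule.add_mem _ (Submodule.subset_span ⟨⟨y, hy.1⟩, Or.inr rfl, rfl⟩) ?_
        refine Submodule.sum_mem _ (fun b _ => ?_)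
        by_cases hbS : (b : α) ∈ S
        · have heb : (fun j => if b = j then (1 : k) else 0) = d ↑b := by
            funext j
            by_cases hj : b = j
            · rw [if_pos hj, ← hj]
              exact ((hsingle ↑b b.2 hbS).1).symm
            · rw [if_neg hj]
              exact ((hsingle ↑b b.2 hbS).2 j (fun h => hj h.symm)).symm
          rw [heb]
          exact Submodule.smul_mem _ _ (Submodule.subset_span ⟨⟨↑b, hbS⟩, Or.inl b.2, rfl⟩)
        · have : (d x - d y) b = 0 := by
            have := hno b hbS
            simp [this]
          rw [this, zero_smul]
          exact Submodule.zero_mem _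
      exact hli.notMem_span_image hns hmem
  · rintro ⟨cond1, cond2⟩
    rw [Fintype.linearIndependent_iff]
    intro g hg
    have hev : ∀ b : ↑B, (∑ i : ↑S, g i * d ↑i b) = 0 := by
      intro b
      have h := congrFun hg b
      simpa using h
    have hBzero : ∀ b : ↑B, (↑b ∉ S) → ∀ (i : ↑S), (↑i : α) ∈ B → g i * d ↑i b = 0 := by
      intro b hb i hiB
      have h0 : d ↑i b = 0 :=
        (hsingle ↑i hiB i.2).2 b (fun h => hb (by rw [h]; exact i.2))
      rw [h0, mul_zero]
    have hext : ∀ i : ↑S, (↑i : α) ∉ B → g i = 0 := by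
      have h012 : (S \ B).ncard = 0 ∨ (S \ B).ncard = 1 ∨ (S \ B).ncard = 2 := by omega
      rcases h012 with h | h | h
      · rw [Set.ncard_eq_zero hSBfin] at h
        intro i hiB
        have : (↑i : α) ∈ S \ B := ⟨i.2, hiB⟩
        rw [h] at this
        exact absurd this (Set.notMem_empty _)
      · obtain ⟨e, hSBe⟩ := Set.ncard_eq_one.mp h
        have he : e ∈ S \ B := by rw [hSBe]; rfl
        obtain ⟨b₀, hb₀S, hb₀⟩ := cond1 e he
        have hge : g ⟨e, he.1⟩ = 0 := by
          have hsum := Finset.sum_eq_single (s := Finset.univ)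
            (f := fun j : ↑S => g j * d ↑j b₀) (⟨e, he.1⟩ : ↑S)
            (fun j _ hj => by
              by_cases hjB : (↑j : α) ∈ B
              · exact hBzero b₀ hb₀S j hjB
              · have : (↑j : α) ∈ S \ B := ⟨j.2, hjB⟩
                rw [hSBe] at this
                exact absurd (Subtype.ext (Set.mem_singleton_iff.mp this)) hj)
            (fun hni => absurd (Finset.mem_univ _) hni)
          have h := hsum.symm.trans (hev b₀)
          have h' : g ⟨e, he.1⟩ * d e b₀ = 0 := h
          rwa [hb₀, mul_one] at h'
        intro i hiB
        have : (↑i : α) ∈ S \ B := ⟨i.2, hiB⟩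
        rw [hSBe] at this
        have hie : i = ⟨e, he.1⟩ := Subtype.ext this
        rw [hie]
        exact hge
      · obtain ⟨e, f, hef, hSBef⟩ := Set.ncard_eq_two.mp h
        have he : e ∈ S \ B := by rw [hSBef]; exact Or.inl rfl
        have hf : f ∈ S \ B := by rw [hSBef]; exact Or.inr rfl
        obtain ⟨b₁, hb₁S, hb₁ne⟩ := cond2 e he f hf hef
        have key : ∀ (p q : α) (hp : p ∈ S \ B) (hq : q ∈ S \ B), p ≠ q →
            (∀ z, z ∈ S \ B → z = p ∨ z = q) →
            (∃ b : ↑B, (↑b ∉ S) ∧ d p b = 1 ∧ d q b = 0) →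
            g ⟨p, hp.1⟩ = 0 ∧ g ⟨q, hq.1⟩ = 0 := by
          rintro p q hp hq hpq hcover ⟨b', hb'S, hp1, hq0⟩
          have hgp : g ⟨p, hp.1⟩ = 0 := by
            have hsum := Finset.sum_eq_single (s := Finset.univ)
              (f := fun j : ↑S => g j * d ↑j b') (⟨p, hp.1⟩ : ↑S)
              (fun j _ hj => by
                by_cases hjB : (↑j : α) ∈ B
                · exact hBzero b' hb'S j hjB
                · rcases hcover ↑j ⟨j.2, hjB⟩ with hc | hc
                  · exact absurd (Subtype.ext hc) hj
                  · show g j * d ↑j b' = 0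
                    rw [show d ↑j b' = d q b' from by rw [hc], hq0, mul_zero])
              (fun hni => absurd (Finset.mem_univ _) hni)
            have h := hsum.symm.trans (hev b')
            have h' : g ⟨p, hp.1⟩ * d p b' = 0 := h
            rwa [hp1, mul_one] at h'
          have hgq : g ⟨q, hq.1⟩ = 0 := by
            obtain ⟨b₂, hb₂S, hq1⟩ := cond1 q hq
            have hsum := Finset.sum_eq_single (s := Finset.univ)
              (f := fun j : ↑S => g j * d ↑j b₂) (⟨q, hq.1⟩ : ↑S)
              (fun j _ hj => by
                by_cases hjB : (↑j : α) ∈ B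
                · exact hBzero b₂ hb₂S j hjB
                · rcases hcover ↑j ⟨j.2, hjB⟩ with hc | hc
                  · show g j * d ↑j b₂ = 0
                    have hj' : j = ⟨p, hp.1⟩ := Subtype.ext hc
                    rw [hj', hgp, zero_mul]
                  · exact absurd (Subtype.ext hc) hj)
              (fun hni => absurd (Finset.mem_univ _) hni)
            have h := hsum.symm.trans (hev b₂)
            have h' : g ⟨q, hq.1⟩ * d q b₂ = 0 := h
            rwa [hq1, mul_one] at h'
          exact ⟨hgp, hgq⟩
        have hcov : ∀ z, z ∈ S \ B → z = e ∨ z = f := by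
          intro z hz; rw [hSBef] at hz; simpa using hz
        have hgef : g ⟨e, he.1⟩ = 0 ∧ g ⟨f, hf.1⟩ = 0 := by
          rcases h01 e he.1 b₁ with he0 | he1
          · have hf1 : d f b₁ = 1 := by
              rcases h01 f hf.1 b₁ with h' | h'
              · exact absurd (he0.trans h'.symm) hb₁ne
              · exact h'
            have hk := key f e hf he hef.symm (fun z hz => (hcov z hz).symm)
              ⟨b₁, hb₁S, hf1, he0⟩
            exact ⟨hk.2, hk.1⟩
          · have hf0 : d f b₁ = 0 := by
              rcases h01 f hf.1 b₁ with h' | h'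
              · exact h'
              · exact absurd (he1.trans h'.symm) hb₁ne
            exact key e f he hf hef hcov ⟨b₁, hb₁S, he1, hf0⟩
        intro i hiB
        rcases hcov ↑i ⟨i.2, hiB⟩ with hc | hc
        · have hie : i = ⟨e, he.1⟩ := Subtype.ext hc
          rw [hie]; exact hgef.1
        · have hif : i = ⟨f, hf.1⟩ := Subtype.ext hc
          rw [hif]; exact hgef.2
    intro i
    by_cases hiB : (↑i : α) ∈ B
    · have hsum := Finset.sum_eq_single (s := Finset.univ)
        (f := fun j : ↑S => g j * d ↑j ⟨↑i, hiB⟩) i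
        (fun j _ hj => by
          by_cases hjB : (↑j : α) ∈ B
          · show g j * d ↑j ⟨↑i, hiB⟩ = 0
            have h0 : d ↑j (⟨↑i, hiB⟩ : ↑B) = 0 :=
              (hsingle ↑j hjB j.2).2 ⟨↑i, hiB⟩
                (fun hcc => hj (Subtype.ext (congrArg Subtype.val hcc).symm))
            rw [h0, mul_zero]
          · show g j * d ↑j ⟨↑i, hiB⟩ = 0
            rw [hext j hjB, zero_mul])
        (fun hni => absurd (Finset.mem_univ _) hni)
      have h := hsum.symm.trans (hev ⟨↑i, hiB⟩)
      have h' : g i * d ↑i ⟨↑i, hiB⟩ = 0 := h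
      rwa [(hsingle ↑i hiB i.2).1, mul_one] at h'
    · exact hext i hiB

/-- Every finite binary matroid of rank `r` on a ground set with at most `r + 2` elements
is regular. -/
theorem binary_card_le_rank_add_two_regular {α : Type*} (M : Matroid α) [M.Finite]
    (r : ℕ) (B : Set α) (hB : M.IsBase B) (hBr : B.ncard = r)
    (hcard : M.E.ncard ≤ r + 2) (hbin : M.IsBinary) :
    M.IsRegular := by
  classical
  obtain ⟨V₂, _, _, ρ, hρ⟩ := hbin
  intro K _
  have hE : M.E.Finite := M.ground_finite
  have hBE : B ⊆ M.E := hB.subset_ground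
  have hBfin : B.Finite := hE.subset hBE
  haveI : Fintype ↑B := hBfin.fintype
  obtain ⟨hinj, hli⟩ := (hρ.1 B hBE).mp hB.indep
  have hliB : LinearIndependent (ZMod 2) (fun b : ↑B => ρ ↑b) :=
    (linearIndependent_image hinj).mpr hli
  -- the image of `B` spans
  have hspB : Submodule.span (ZMod 2) (ρ '' B) = ⊤ := by
    have hsub : ρ '' M.E ⊆ ↑(Submodule.span (ZMod 2) (ρ '' B)) := by
      rintro _ ⟨x, hxE, rfl⟩
      by_cases hxB : x ∈ B
      · exact Submodule.subset_span ⟨x, hxB, rfl⟩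
      · have hdep := (hB.insert_dep ⟨hxE, hxB⟩).not_indep
        rw [hρ.1 (insert x B) (Set.insert_subset hxE hBE)] at hdep
        by_cases hnew : ρ x ∈ ρ '' B
        · exact Submodule.subset_span hnew
        · have hinj' : Set.InjOn ρ (insert x B) :=
            (Set.injOn_insert hxB).mpr ⟨hinj, hnew⟩
          have hnli : ¬ LinearIndependent (ZMod 2) ((↑) : ↥(ρ '' insert x B) → V₂) :=
            fun h => hdep ⟨hinj', h⟩
          rw [Set.image_insert_eq] at hnli
          replace hnli := fun h => hnli ((linearIndepOn_id_insert hnew).mpr h)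
          by_contra hsp
          exact hnli ⟨hli, hsp⟩
    rw [eq_top_iff, ← hρ.2]
    exact Submodule.span_le.mpr hsub
  have hspan : ⊤ ≤ Submodule.span (ZMod 2) (Set.range (fun b : ↑B => ρ ↑b)) := by
    rw [← Set.image_eq_range]
    exact hspB.ge
  let β : Module.Basis ↑B (ZMod 2) V₂ := Module.Basis.mk hliB hspan
  let L₂ : V₂ ≃ₗ[ZMod 2] (↑B → ZMod 2) :=
    β.repr.trans (Finsupp.linearEquivFunOnFinite (ZMod 2) (ZMod 2) ↑B)
  set c : α → ↑B → ZMod 2 := fun x => L₂ (ρ x) with hc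
  have hrepc : M.IsRep (ZMod 2) c := hρ.comp_equiv L₂
  have hcB : ∀ b : ↑B, c ↑b = Pi.single b 1 := by
    intro b
    show L₂ (ρ ↑b) = Pi.single b 1
    rw [show ρ ↑b = β b from (Module.Basis.mk_apply hliB hspan b).symm]
    simp [L₂]
  -- lifting map from `ZMod 2` to `K`
  have h2 : ∀ a : ZMod 2, a = 0 ∨ a = 1 := by decide
  let ι : ZMod 2 → K := fun a => if a = 1 then 1 else 0
  have hι0 : ι 0 = 0 := by simp [ι]
  have hι1 : ι 1 = 1 := by simp [ι]
  have hιinj : ∀ a b : ZMod 2, ι a = ι b → a = b := by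
    intro a b hab
    rcases h2 a with ha | ha <;> rcases h2 b with hb | hb <;> subst ha <;> subst hb <;>
      first
        | rfl
        | (rw [hι0, hι1] at hab; exact absurd hab.symm one_ne_zero)
        | (rw [hι0, hι1] at hab; exact absurd hab one_ne_zero)
  let ρK : α → ↑B → K := fun x b => ι (c x b)
  have hcB1 : ∀ (x : α) (hx : x ∈ B), c x ⟨x, hx⟩ = 1 ∧
      ∀ b' : ↑B, b' ≠ ⟨x, hx⟩ → c x b' = 0 := by
    intro x hx
    rw [show c x = Pi.single (⟨x, hx⟩ : ↑B) 1 from hcB ⟨x, hx⟩]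
    exact ⟨Pi.single_eq_same _ _, fun b' hb' => Pi.single_eq_of_ne hb' _⟩
  have hIsRepK : M.IsRep K ρK := by
    constructor
    · intro S hS
      have hSfin : S.Finite := hE.subset hS
      have hSBfin : (S \ B).Finite := hSfin.diff
      have hSB2 : (S \ B).ncard ≤ 2 := by
        have hsub : S \ B ⊆ M.E \ B := Set.diff_subset_diff_left hS
        have hEB : (M.E \ B).ncard = M.E.ncard - B.ncard := Set.ncard_diff hBE hBfin
        have h1 : (S \ B).ncard ≤ (M.E \ B).ncard := Set.ncard_le_ncard hsub hE.diff
        omega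
      -- hypotheses of the core lemma, for both fields
      have h01c : ∀ x ∈ S, ∀ b : ↑B, c x b = 0 ∨ c x b = 1 := fun x _ b => h2 _
      have hsc : ∀ (x : α) (hx : x ∈ B), x ∈ S → (c x ⟨x, hx⟩ = 1 ∧
          ∀ b' : ↑B, b' ≠ ⟨x, hx⟩ → c x b' = 0) := fun x hx _ => hcB1 x hx
      have h01K : ∀ x ∈ S, ∀ b : ↑B, ρK x b = 0 ∨ ρK x b = 1 := by
        intro x _ b
        rcases h2 (c x b) with h | h <;> [left; right] <;> simp [ρK, h, hι0, hι1]
      have hsK : ∀ (x : α) (hx : x ∈ B), x ∈ S → (ρK x ⟨x, hx⟩ = 1 ∧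
          ∀ b' : ↑B, b' ≠ ⟨x, hx⟩ → ρK x b' = 0) := by
        intro x hx hxS
        refine ⟨?_, fun b' hb' => ?_⟩
        · show ι (c x ⟨x, hx⟩) = 1
          rw [(hcB1 x hx).1, hι1]
        · show ι (c x b') = 0
          rw [(hcB1 x hx).2 b' hb', hι0]
      have hcoreC := core_li_iff hSfin hSBfin hSB2 c h01c hsc
      have hcoreK := core_li_iff hSfin hSBfin hSB2 ρK h01K hsK
      -- the combinatorial conditions agree
      have hRHS :
          ((∀ x ∈ S \ B, ∃ b : ↑B, (↑b ∉ S) ∧ c x b = 1) ∧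
           (∀ x ∈ S \ B, ∀ y ∈ S \ B, x ≠ y → ∃ b : ↑B, (↑b ∉ S) ∧ c x b ≠ c y b)) ↔
          ((∀ x ∈ S \ B, ∃ b : ↑B, (↑b ∉ S) ∧ ρK x b = 1) ∧
           (∀ x ∈ S \ B, ∀ y ∈ S \ B, x ≠ y → ∃ b : ↑B, (↑b ∉ S) ∧ ρK x b ≠ ρK y b)) := by
        constructor
        · rintro ⟨hA, hD⟩
          constructor
          · intro x hx
            obtain ⟨b, hbS, hb1⟩ := hA x hx
            exact ⟨b, hbS, by show ι (c x b) = 1; rw [hb1, hι1]⟩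
          · intro x hx y hy hxy
            obtain ⟨b, hbS, hbne⟩ := hD x hx y hy hxy
            exact ⟨b, hbS, fun h => hbne (hιinj _ _ h)⟩
        · rintro ⟨hA, hD⟩
          constructor
          · intro x hx
            obtain ⟨b, hbS, hb1⟩ := hA x hx
            refine ⟨b, hbS, hιinj _ _ ?_⟩
            rw [hι1]
            exact hb1
          · intro x hx y hy hxy
            obtain ⟨b, hbS, hbne⟩ := hD x hx y hy hxy
            exact ⟨b, hbS, fun h => hbne (by show ι (c x b) = ι (c y b); rw [h])⟩
      have hfam : LinearIndependent (ZMod 2) (fun x : S => c x) ↔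
          LinearIndependent K (fun x : S => ρK x) := by
        rw [hcoreC, hcoreK]
        exact hRHS
      have hinj_iff : Set.InjOn c S ↔ Set.InjOn ρK S := by
        constructor
        · intro h x hx y hy hxy
          refine h hx hy (funext fun b => hιinj _ _ (congrFun hxy b))
        · intro h x hx y hy hxy
          refine h hx hy (funext fun b => ?_)
          show ι (c x b) = ι (c y b)
          rw [congrFun hxy b]
      rw [hrepc.1 S hS]
      constructor
      · rintro ⟨hinjc, hlic⟩
        refine ⟨hinj_iff.mp hinjc, ?_⟩
        exact (linearIndependent_image (hinj_iff.mp hinjc)).mp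
          (hfam.mp ((linearIndependent_image hinjc).mpr hlic))
      · rintro ⟨hinjK, hliK⟩
        refine ⟨hinj_iff.mpr hinjK, ?_⟩
        exact (linearIndependent_image (hinj_iff.mpr hinjK)).mp
          (hfam.mpr ((linearIndependent_image hinjK).mpr hliK))
    · rw [eq_top_iff]
      intro v _
      rw [pi_eq_sum_univ v]
      refine Submodule.sum_mem _ (fun b _ => Submodule.smul_mem _ _ (Submodule.subset_span ?_))
      refine ⟨↑b, hBE b.2, ?_⟩
      funext j
      show ι (c ↑b j) = if b = j then 1 else 0
      by_cases hj : b = j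
      · rw [if_pos hj, hj, (hcB1 ↑j (hj ▸ b.2)).1]
        exact hι1
      · rw [if_neg hj, (hcB1 ↑b b.2).2 j (fun h => hj h.symm), hι0]
  let eB := Fintype.equivFin ↑B
  let L : (↑B → K) ≃ₗ[K] (Fin (Fintype.card ↑B) → K) := (LinearEquiv.funCongrLeft K K eB).symm
  exact ⟨Fin (Fintype.card ↑B) → K, inferInstance, inferInstance,
    fun x => L (ρK x), hIsRepK.comp_equiv L⟩
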